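/- arXiv:2101.01704 — 2 statements merged into one kernel-verified Lean document; each statement's English description precedes it below -/
import Mathlib

section
/- Suppose H0 holds. Then: (i) the function D̄_C : int(dom φ) → ℝ, D̄_C(x) = E[D_{C_ξ}(x)], is lower semicontinuous; (ii) for every x ∈ int(dom φ), x ∈ C if and only if D̄_C(x) = 0. -/
open Set Filter Topology MeasureTheory ProbabilityTheory
open scoped InnerProductSpace ENNReal Classical

noncomputable section

/-- A Legendre function on a Euclidean space `X`, represented by its (finite) values `f` on its
effective domain `dom`, together with the data of its Fenchel conjugate (`conj` on `domConj`)
and the gradients of both. -/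
structure LegendreFn (X : Type*) [NormedAddCommGroup X] [InnerProductSpace ℝ X]
    [FiniteDimensional ℝ X] where
  /-- the values of `φ` on its domain -/
  f : X → ℝ
  /-- the effective domain of `φ` (`φ = +∞` outside of it) -/
  dom : Set X
  /-- the values of the Fenchel conjugate `φ*` on its domain -/
  conj : X → ℝ
  /-- the effective domain of `φ*` -/
  domConj : Set X
  /-- the gradient of `φ` (meaningful on `interior dom`) -/
  grad : X → X
  /-- the gradient of `φ*` (meaningful on `interior domConj`) -/
  gradConj : X → X
  dom_nonempty : dom.Nonempty
  int_dom_nonempty : (interior dom).Nonempty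
  dom_convex : Convex ℝ dom
  convexOn : ConvexOn ℝ dom f
  /-- `φ` is closed: the epigraph of the extended function is closed -/
  closedEpi : IsClosed {p : X × ℝ | p.1 ∈ dom ∧ f p.1 ≤ p.2}
  /-- essential smoothness, part 1: differentiability on the interior of the domain -/
  hasGrad : ∀ x ∈ interior dom, HasGradientAt f (grad x) x
  /-- essential smoothness, part 2: the gradient blows up at the boundary -/
  grad_blowup : ∀ (u : ℕ → X) (x : X), (∀ n, u n ∈ interior dom) → x ∈ frontier dom →
      Tendsto u atTop (nhds x) → Tendsto (fun n => ‖grad (u n)‖) atTop atTop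
  /-- `domConj` is the set where the conjugate supremum is finite -/
  domConj_spec : ∀ y : X, y ∈ domConj ↔ BddAbove ((fun x => ⟪x, y⟫_ℝ - f x) '' dom)
  /-- `conj` is the Fenchel conjugate of `φ` -/
  conj_spec : ∀ y ∈ domConj, IsLUB ((fun x => ⟪x, y⟫_ℝ - f x) '' dom) (conj y)
  int_domConj_nonempty : (interior domConj).Nonempty
  /-- essential strict convexity: `φ` is strictly convex on every convex subset of `dom ∂φ` -/
  strict : ∀ s : Set X,
      s ⊆ {x ∈ dom | ∃ v : X, ∀ z ∈ dom, f x + ⟪v, z - x⟫_ℝ ≤ f z} →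
      Convex ℝ s → StrictConvexOn ℝ s f
  hasGradConj : ∀ y ∈ interior domConj, HasGradientAt conj (gradConj y) y
  /-- Bregman projections onto closed convex sets meeting `interior dom` exist
  (Bauschke–Borwein). -/
  proj_exists : ∀ S : Set X, IsClosed S → Convex ℝ S → (S ∩ interior dom).Nonempty →
      ∀ x ∈ interior dom, ∃ p ∈ S ∩ interior dom, ∀ z ∈ S ∩ dom,
        f p - ⟪p, grad x⟫_ℝ ≤ f z - ⟪z, grad x⟫_ℝ

namespace LegendreFn

variable {X : Type*} [NormedAddCommGroup X] [InnerProductSpace ℝ X] [FiniteDimensional ℝ X]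

/-- The Bregman distance `D_φ(x, y)`; the formula is meaningful for `x ∈ dom φ` and
`y ∈ int (dom φ)`. -/
def breg (L : LegendreFn X) (x y : X) : ℝ :=
  L.f x - L.f y - ⟪x - y, L.grad y⟫_ℝ

/-- The Bregman distance from the point `y` to the set `S`: `D_S(y) = inf_{z ∈ S} D_φ(z, y)`. -/
def distTo (L : LegendreFn X) (S : Set X) (y : X) : ℝ :=
  sInf ((fun z => L.breg z y) '' (S ∩ L.dom))

/-- `p` is the Bregman projection of `x` onto `S`. -/
def IsBregProj (L : LegendreFn X) (S : Set X) (x p : X) : Prop :=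
  p ∈ S ∧ p ∈ interior L.dom ∧ ∀ z ∈ S ∩ L.dom, L.breg p x ≤ L.breg z x

/-- The Bregman projection of `x` onto `S` (as a function; well defined whenever the Bregman
projection exists, since it is then unique). -/
def proj (L : LegendreFn X) (S : Set X) (x : X) : X :=
  @Classical.epsilon X ⟨0⟩ (L.IsBregProj S x)

end LegendreFn

/-- Condition SC (sequential consistency). -/
def SCcond {X : Type*} [NormedAddCommGroup X] [InnerProductSpace ℝ X] [FiniteDimensional ℝ X]
    (L : LegendreFn X) : Prop :=
  ∀ z y : ℕ → X, (∀ n, z n ∈ interior L.dom) → (∀ n, y n ∈ interior L.dom) →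
    Bornology.IsBounded (Set.range z) → Bornology.IsBounded (Set.range y) →
    Tendsto (fun n => L.breg (z n) (y n)) atTop (nhds 0) →
    Tendsto (fun n => z n - y n) atTop (nhds 0)

/-- Assumption H0: `C ≠ X`, `dom φ*` is open and `int (dom φ) ∩ C ≠ ∅`
(`φ` being Legendre is part of the `LegendreFn` structure). -/
def H0 {X : Type*} [NormedAddCommGroup X] [InnerProductSpace ℝ X] [FiniteDimensional ℝ X]
    (L : LegendreFn X) (C : Set X) : Prop :=
  C ≠ Set.univ ∧ IsOpen L.domConj ∧ (interior L.dom ∩ C).Nonempty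

/-- `G` is the Moore–Penrose pseudoinverse of `T`. -/
def IsMPInv {E F : Type*} [NormedAddCommGroup E] [InnerProductSpace ℝ E] [FiniteDimensional ℝ E]
    [NormedAddCommGroup F] [InnerProductSpace ℝ F] [FiniteDimensional ℝ F]
    (T : E →L[ℝ] F) (G : F →L[ℝ] E) : Prop :=
  T ∘L G ∘L T = T ∧ G ∘L T ∘L G = G ∧
    ContinuousLinearMap.adjoint (T ∘L G) = T ∘L G ∧
    ContinuousLinearMap.adjoint (G ∘L T) = G ∘L T

/-- The orthogonal projection onto a subspace, as a map `X →L[ℝ] X`. -/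
def projL {X : Type*} [NormedAddCommGroup X] [InnerProductSpace ℝ X] [FiniteDimensional ℝ X]
    (K : Submodule ℝ X) : X →L[ℝ] X :=
  K.subtypeL.comp K.orthogonalProjectionOnto

/-- The set `K(x)` of points having the same Bregman projection onto `C` as `x` and not larger
Bregman distance to `C`. -/
def Kset {X : Type*} [NormedAddCommGroup X] [InnerProductSpace ℝ X] [FiniteDimensional ℝ X]
    (L : LegendreFn X) (C : Set X) (x : X) : Set X :=
  {z | z ∈ interior L.dom ∧ L.proj C z = L.proj C x ∧ L.distTo C z ≤ L.distTo C x}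

section Affine

variable {X Y : Type*} [NormedAddCommGroup X] [InnerProductSpace ℝ X] [FiniteDimensional ℝ X]
  [NormedAddCommGroup Y] [InnerProductSpace ℝ Y] [FiniteDimensional ℝ Y]
  {I : Type*} {Yf : I → Type*} [∀ i, NormedAddCommGroup (Yf i)]
  [∀ i, InnerProductSpace ℝ (Yf i)] [∀ i, FiniteDimensional ℝ (Yf i)]

/-- Assumption H2₁: `φ*` is twice differentiable (with second derivative `hess`), and for all
`x ∈ int (dom φ) ∩ C`, `A ∘ ∇²φ*(∇φ(x)) ≠ 0` and
`sup_i ‖Aᵢ* (Aᵢ ∇²φ*(∇φ(x)) Aᵢ*)† Aᵢ‖ < ∞`. -/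
def H21 (L : LegendreFn X) (A : ∀ i, X →L[ℝ] Yf i) (AY : X →L[ℝ] Y) (C : Set X)
    (hess : X → X →L[ℝ] X) : Prop :=
  (∀ y ∈ interior L.domConj, HasFDerivAt L.gradConj (hess y) y) ∧
  ∀ x ∈ interior L.dom ∩ C,
    AY ∘L hess (L.grad x) ≠ 0 ∧
    ∃ M : ℝ, ∀ (i : I) (G : Yf i →L[ℝ] Yf i),
      IsMPInv (A i ∘L hess (L.grad x) ∘L ContinuousLinearMap.adjoint (A i)) G →
      ‖ContinuousLinearMap.adjoint (A i) ∘L G ∘L A i‖ ≤ M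

/-- The orthogonal projection `Q_i(x)` onto `range (H(x) Aᵢ*)`, where `H(x)` (here `Hrt x`) is
the positive square root of `∇²φ*(∇φ(x))`. -/
def Qproj (A : ∀ i, X →L[ℝ] Yf i) (Hrt : X → X →L[ℝ] X) (i : I) (x : X) : X →L[ℝ] X :=
  projL (LinearMap.range (Hrt x ∘L ContinuousLinearMap.adjoint (A i)).toLinearMap)

/-- The subspace `V(x) = range (H(x) A*)`. -/
def Vsub (AY : X →L[ℝ] Y) (Hrt : X → X →L[ℝ] X) (x : X) : Submodule ℝ X :=
  LinearMap.range (Hrt x ∘L ContinuousLinearMap.adjoint AY).toLinearMap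

/-- `γ_𝒞(x) = inf_{v ∈ V(x) \ {0}} sup_i ‖Q_i(x) v‖² / ‖v‖²`. -/
def gammaC (A : ∀ i, X →L[ℝ] Yf i) (AY : X →L[ℝ] Y) (Hrt : X → X →L[ℝ] X) (x : X) : ℝ :=
  ⨅ v : {v : X // v ∈ Vsub AY Hrt x ∧ v ≠ 0},
    ⨆ i : I, ‖Qproj A Hrt i x v.1‖ ^ 2 / ‖v.1‖ ^ 2

/-- `σ_𝒞(x)`, the (deterministic, greedy) contraction factor. -/
def sigmaC (L : LegendreFn X) (Cs : I → Set X) (C : Set X) (γ : X → ℝ) (x : X) : ℝ :=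
  if x ∈ C then 1 - γ x
  else ⨆ z : ↥(Kset L C x \ C), ⨅ i : I, L.distTo C (L.proj (Cs i) z) / L.distTo C z

end Affine

section Stochastic

variable {X Y : Type*} [NormedAddCommGroup X] [InnerProductSpace ℝ X] [FiniteDimensional ℝ X]
  [NormedAddCommGroup Y] [InnerProductSpace ℝ Y] [FiniteDimensional ℝ Y]
  {I : Type*} {Yf : I → Type*} [∀ i, NormedAddCommGroup (Yf i)]
  [∀ i, InnerProductSpace ℝ (Yf i)] [∀ i, FiniteDimensional ℝ (Yf i)]
  {Ω : Type*} [MeasurableSpace Ω]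

/-- Assumption H2₂ (stochastic version of H2₁, with an essential supremum). -/
def H22 (L : LegendreFn X) (A : ∀ i, X →L[ℝ] Yf i) (AY : X →L[ℝ] Y) (C : Set X)
    (hess : X → X →L[ℝ] X) (P : Measure Ω) (ξ : Ω → I) : Prop :=
  (∀ y ∈ interior L.domConj, HasFDerivAt L.gradConj (hess y) y) ∧
  ∀ x ∈ interior L.dom ∩ C,
    AY ∘L hess (L.grad x) ≠ 0 ∧
    ∃ M : ℝ, ∀ᵐ ω ∂P, ∀ G : Yf (ξ ω) →L[ℝ] Yf (ξ ω),
      IsMPInv (A (ξ ω) ∘L hess (L.grad x) ∘L ContinuousLinearMap.adjoint (A (ξ ω))) G →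
      ‖ContinuousLinearMap.adjoint (A (ξ ω)) ∘L G ∘L A (ξ ω)‖ ≤ M

/-- `Q̄(x) = E[Q_ξ(x)]` (Bochner expectation). -/
def Qbar (A : ∀ i, X →L[ℝ] Yf i) (Hrt : X → X →L[ℝ] X) (P : Measure Ω) (ξ : Ω → I) (x : X) :
    X →L[ℝ] X :=
  ∫ ω, Qproj A Hrt (ξ ω) x ∂P

/-- `γ_{𝒞,μ}(x) = inf_{v ∈ V(x) \ {0}} ⟪Q̄(x) v, v⟫ / ‖v‖²`. -/
def gammaCmu (A : ∀ i, X →L[ℝ] Yf i) (AY : X →L[ℝ] Y) (Hrt : X → X →L[ℝ] X)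
    (P : Measure Ω) (ξ : Ω → I) (x : X) : ℝ :=
  ⨅ v : {v : X // v ∈ Vsub AY Hrt x ∧ v ≠ 0},
    ⟪Qbar A Hrt P ξ x v.1, v.1⟫_ℝ / ‖v.1‖ ^ 2

/-- `σ_{𝒞,μ}(x)`, the stochastic contraction factor. -/
def sigmaCmu (L : LegendreFn X) (Cs : I → Set X) (C : Set X) (γ : X → ℝ)
    (P : Measure Ω) (ξ : Ω → I) (x : X) : ℝ :=
  if x ∈ C then 1 - γ x
  else ⨆ z : ↥(Kset L C x \ C),
    (∫ ω, L.distTo C (L.proj (Cs (ξ ω)) z) ∂P) / L.distTo C z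

/-- `D̄_C(x) = E[D_{C_ξ}(x)]`. -/
def DbarFn (L : LegendreFn X) (Cs : I → Set X) (P : Measure Ω) (ξ : Ω → I) (x : X) : ℝ :=
  ∫ ω, L.distTo (Cs (ξ ω)) x ∂P

end Stochastic

section AuxProofs

variable {X : Type*} [NormedAddCommGroup X] [InnerProductSpace ℝ X] [FiniteDimensional ℝ X]

namespace LegendreFn

variable (L : LegendreFn X)

lemma aux_lineDeriv {x w : X} (hx : x ∈ interior L.dom) :
    HasDerivAt (fun t : ℝ => L.f (x + t • w)) ⟪L.grad x, w⟫_ℝ 0 := by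
  have h1 : HasDerivAt (fun t : ℝ => x + t • w) w 0 := by
    simpa using ((hasDerivAt_id (0:ℝ)).smul_const w).const_add x
  have h2 : HasFDerivAt L.f (InnerProductSpace.toDual ℝ X (L.grad x)) x := L.hasGrad x hx
  have h2' : HasFDerivAt L.f (InnerProductSpace.toDual ℝ X (L.grad x)) (x + (0:ℝ) • w) := by
    simpa using h2
  exact (h2'.comp_hasDerivAt 0 h1).congr_deriv (by simp)

lemma aux_subgrad {x z : X} (hx : x ∈ interior L.dom) (hz : z ∈ L.dom) :
    L.f x + ⟪z - x, L.grad x⟫_ℝ ≤ L.f z := by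
  rcases eq_or_ne z x with rfl | hne
  · simp
  have hxd : x ∈ L.dom := interior_subset hx
  have hderiv : HasDerivAt (fun t : ℝ => L.f (x + t • (z - x))) ⟪L.grad x, z - x⟫_ℝ 0 :=
    L.aux_lineDeriv hx
  have hmem : ∀ a ∈ Icc (0:ℝ) 1, x + a • (z - x) ∈ L.dom := fun a ha =>
    L.dom_convex.add_smul_sub_mem hxd hz ha
  have hconv : ConvexOn ℝ (Icc (0:ℝ) 1) (fun t => L.f (x + t • (z - x))) := by
    refine ⟨convex_Icc 0 1, fun a ha b hb s t hs ht hst => ?_⟩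
    have he : x + (s * a + t * b) • (z - x) =
        s • (x + a • (z - x)) + t • (x + b • (z - x)) := by
      have hts : t = 1 - s := by linarith
      subst hts; module
    simp only [smul_eq_mul]
    rw [he]
    simpa using L.convexOn.2 (hmem a ha) (hmem b hb) hs ht hst
  have hle := hconv.le_slope_of_hasDerivAt (left_mem_Icc.2 zero_le_one)
    (right_mem_Icc.2 zero_le_one) zero_lt_one hderiv
  rw [slope_def_field] at hle
  simp only [one_smul, zero_smul, add_zero, add_sub_cancel] at hle
  have : ⟪L.grad x, z - x⟫_ℝ ≤ L.f z - L.f x := by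
    simpa using hle
  rw [real_inner_comm]
  linarith

lemma aux_breg_nonneg {x z : X} (hx : x ∈ interior L.dom) (hz : z ∈ L.dom) :
    0 ≤ L.breg z x := by
  have := L.aux_subgrad hx hz
  unfold LegendreFn.breg
  linarith

lemma aux_strictConvexOn : StrictConvexOn ℝ (interior L.dom) L.f :=
  L.strict _
    (fun x hx => ⟨interior_subset hx, L.grad x, fun z hz => by
      rw [real_inner_comm]; exact L.aux_subgrad hx hz⟩)
    L.dom_convex.interior

lemma aux_eq_of_breg_nonpos {x p : X} (hx : x ∈ interior L.dom) (hp : p ∈ interior L.dom)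
    (h : L.breg p x ≤ 0) : p = x := by
  by_contra hne
  have hmid : (1/2 : ℝ) • p + (1/2 : ℝ) • x ∈ interior L.dom :=
    L.dom_convex.interior hp hx (by norm_num) (by norm_num) (by norm_num)
  have hs := L.aux_strictConvexOn.2 hp hx hne (by norm_num : (0:ℝ) < 1/2)
    (by norm_num : (0:ℝ) < 1/2) (by norm_num)
  have hgi := L.aux_subgrad hx (interior_subset hmid)
  have he : ((1/2 : ℝ) • p + (1/2 : ℝ) • x) - x = (1/2 : ℝ) • (p - x) := by module
  rw [he, real_inner_smul_left] at hgi
  unfold LegendreFn.breg at h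
  simp only [smul_eq_mul] at hs
  linarith

lemma aux_bddBelow {S : Set X} {x : X} (hx : x ∈ interior L.dom) :
    BddBelow ((fun z => L.breg z x) '' (S ∩ L.dom)) := by
  refine ⟨0, ?_⟩
  rintro b ⟨z, hz, rfl⟩
  exact L.aux_breg_nonneg hx hz.2

lemma aux_distTo_nonneg {S : Set X} {x : X} (hx : x ∈ interior L.dom) :
    0 ≤ L.distTo S x := by
  rcases (S ∩ L.dom).eq_empty_or_nonempty with h | h
  · simp [LegendreFn.distTo, h, Real.sInf_empty]
  · exact le_csInf (h.image _) (by rintro b ⟨z, hz, rfl⟩; exact L.aux_breg_nonneg hx hz.2)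

lemma aux_distTo_le {S : Set X} {x z : X} (hx : x ∈ interior L.dom) (hz : z ∈ S ∩ L.dom) :
    L.distTo S x ≤ L.breg z x :=
  csInf_le (L.aux_bddBelow hx) (Set.mem_image_of_mem _ hz)

lemma aux_zero_mem {S : Set X} {x : X} (hSc : IsClosed S) (hSco : Convex ℝ S)
    (hSne : (S ∩ interior L.dom).Nonempty) (hx : x ∈ interior L.dom)
    (h : L.distTo S x = 0) : x ∈ S := by
  obtain ⟨p, ⟨hpS, hpint⟩, hmin⟩ := L.proj_exists S hSc hSco hSne x hx
  have hple : ∀ z ∈ S ∩ L.dom, L.breg p x ≤ L.breg z x := by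
    intro z hz
    have := hmin z hz
    unfold LegendreFn.breg
    simp only [inner_sub_left]
    linarith
  have hpmem : p ∈ S ∩ L.dom := ⟨hpS, interior_subset hpint⟩
  have hfin : L.breg p x ≤ L.distTo S x := by
    refine le_csInf ⟨_, Set.mem_image_of_mem _ hpmem⟩ ?_
    rintro b ⟨z, hz, rfl⟩
    exact hple z hz
  have : p = x := L.aux_eq_of_breg_nonpos hx hpint (by rw [h] at hfin; linarith)
  exact this ▸ hpS

lemma aux_comb (z y₁ y₂ : X) {a b : ℝ} (hab : a + b = 1) :
    ⟪z, a • y₁ + b • y₂⟫_ℝ - L.f z = a * (⟪z, y₁⟫_ℝ - L.f z) + b * (⟪z, y₂⟫_ℝ - L.f z) := by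
  rw [inner_add_right, real_inner_smul_right, real_inner_smul_right]
  linear_combination (L.f z) * hab

lemma aux_grad_mem_conj {x : X} (hx : x ∈ interior L.dom) : L.grad x ∈ L.domConj := by
  rw [L.domConj_spec]
  refine ⟨⟪x, L.grad x⟫_ℝ - L.f x, ?_⟩
  rintro b ⟨z, hz, rfl⟩
  have h1 := L.aux_subgrad hx hz
  rw [inner_sub_left] at h1
  show ⟪z, L.grad x⟫_ℝ - L.f z ≤ ⟪x, L.grad x⟫_ℝ - L.f x
  linarith

lemma aux_conj_grad {x : X} (hx : x ∈ interior L.dom) :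
    L.conj (L.grad x) = ⟪x, L.grad x⟫_ℝ - L.f x := by
  have hlub := L.conj_spec _ (L.aux_grad_mem_conj hx)
  refine le_antisymm (hlub.2 ?_) (hlub.1 ⟨x, interior_subset hx, rfl⟩)
  rintro b ⟨z, hz, rfl⟩
  have h1 := L.aux_subgrad hx hz
  rw [inner_sub_left] at h1
  show ⟪z, L.grad x⟫_ℝ - L.f z ≤ ⟪x, L.grad x⟫_ℝ - L.f x
  linarith

/-- The support-type function `y ↦ sup_{z ∈ S ∩ dom} (⟪z,y⟫ - f z)`. -/
def sig (S : Set X) (y : X) : ℝ :=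
  sSup ((fun z => ⟪z, y⟫_ℝ - L.f z) '' (S ∩ L.dom))

lemma aux_sig_bdd {S : Set X} {y : X} (hy : y ∈ L.domConj) :
    BddAbove ((fun z => ⟪z, y⟫_ℝ - L.f z) '' (S ∩ L.dom)) :=
  ((L.domConj_spec y).1 hy).mono (Set.image_mono Set.inter_subset_right)

lemma aux_domConj_convex : Convex ℝ L.domConj := by
  intro y₁ h₁ y₂ h₂ a b ha hb hab
  rw [L.domConj_spec] at h₁ h₂ ⊢
  obtain ⟨b₁, hb₁⟩ := h₁
  obtain ⟨b₂, hb₂⟩ := h₂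
  refine ⟨a * b₁ + b * b₂, ?_⟩
  rintro r ⟨z, hz, rfl⟩
  show ⟪z, a • y₁ + b • y₂⟫_ℝ - L.f z ≤ a * b₁ + b * b₂
  rw [L.aux_comb z y₁ y₂ hab]
  have h1 := hb₁ (Set.mem_image_of_mem _ hz)
  have h2 := hb₂ (Set.mem_image_of_mem _ hz)
  have := mul_le_mul_of_nonneg_left h1 ha
  have := mul_le_mul_of_nonneg_left h2 hb
  linarith

lemma aux_sig_convexOn {S : Set X} (hne : (S ∩ L.dom).Nonempty) :
    ConvexOn ℝ L.domConj (L.sig S) := by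
  refine ⟨L.aux_domConj_convex, fun y₁ h₁ y₂ h₂ a b ha hb hab => ?_⟩
  refine csSup_le (hne.image _) ?_
  rintro r ⟨z, hz, rfl⟩
  show ⟪z, a • y₁ + b • y₂⟫_ℝ - L.f z ≤ a • L.sig S y₁ + b • L.sig S y₂
  rw [L.aux_comb z y₁ y₂ hab]
  have h1' : ⟪z, y₁⟫_ℝ - L.f z ≤ L.sig S y₁ :=
    le_csSup (L.aux_sig_bdd h₁) (Set.mem_image_of_mem _ hz)
  have h2' : ⟪z, y₂⟫_ℝ - L.f z ≤ L.sig S y₂ :=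
    le_csSup (L.aux_sig_bdd h₂) (Set.mem_image_of_mem _ hz)
  have := mul_le_mul_of_nonneg_left h1' ha
  have := mul_le_mul_of_nonneg_left h2' hb
  simp only [smul_eq_mul]
  linarith

lemma aux_conj_convexOn : ConvexOn ℝ L.domConj L.conj := by
  refine ⟨L.aux_domConj_convex, fun y₁ h₁ y₂ h₂ a b ha hb hab => ?_⟩
  have hmem := L.aux_domConj_convex h₁ h₂ ha hb hab
  have hlub := L.conj_spec _ hmem
  refine hlub.2 ?_
  rintro r ⟨z, hz, rfl⟩
  show ⟪z, a • y₁ + b • y₂⟫_ℝ - L.f z ≤ a • L.conj y₁ + b • L.conj y₂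
  rw [L.aux_comb z y₁ y₂ hab]
  have h1' : ⟪z, y₁⟫_ℝ - L.f z ≤ L.conj y₁ :=
    (L.conj_spec _ h₁).1 (Set.mem_image_of_mem _ hz)
  have h2' : ⟪z, y₂⟫_ℝ - L.f z ≤ L.conj y₂ :=
    (L.conj_spec _ h₂).1 (Set.mem_image_of_mem _ hz)
  have := mul_le_mul_of_nonneg_left h1' ha
  have := mul_le_mul_of_nonneg_left h2' hb
  simp only [smul_eq_mul]
  linarith

lemma aux_f_contOn : ContinuousOn L.f (interior L.dom) :=
  ((L.convexOn.subset interior_subset L.dom_convex.interior).continuousOn isOpen_interior)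

lemma aux_subgrad_unique {x v : X} (hx : x ∈ interior L.dom)
    (hv : ∀ z ∈ L.dom, L.f x + ⟪z - x, v⟫_ℝ ≤ L.f z) : v = L.grad x := by
  have main : ∀ w : X, ⟪L.grad x, w⟫_ℝ = ⟪w, v⟫_ℝ := by
    intro w
    have hmem : ∀ᶠ t : ℝ in 𝓝 0, x + t • w ∈ interior L.dom := by
      have hc : ContinuousAt (fun t : ℝ => x + t • w) 0 := by fun_prop
      have := hc (isOpen_interior.mem_nhds (by simpa using hx))
      exact this
    have hlocmin : IsLocalMin (fun t : ℝ => L.f (x + t • w) - t * ⟪w, v⟫_ℝ) 0 := by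
      filter_upwards [hmem] with t ht
      have h1 := hv _ (interior_subset ht)
      have h2 : x + t • w - x = t • w := by abel
      rw [h2, real_inner_smul_left] at h1
      simp only [zero_smul, add_zero, zero_mul, sub_zero]
      linarith
    have hd : HasDerivAt (fun t : ℝ => L.f (x + t • w) - t * ⟪w, v⟫_ℝ)
        (⟪L.grad x, w⟫_ℝ - ⟪w, v⟫_ℝ) 0 :=
      (L.aux_lineDeriv hx).sub (by simpa using (hasDerivAt_id (0:ℝ)).mul_const ⟪w, v⟫_ℝ)
    have := hlocmin.hasDerivAt_eq_zero hd
    linarith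
  have hz : ∀ w : X, ⟪v - L.grad x, w⟫_ℝ = 0 := by
    intro w
    have h1 := main w
    have h2 : ⟪v, w⟫_ℝ = ⟪w, v⟫_ℝ := real_inner_comm w v
    rw [inner_sub_left]
    linarith
  have h0 := hz (v - L.grad x)
  rw [real_inner_self_eq_norm_sq] at h0
  exact sub_eq_zero.1 (norm_eq_zero.1 (sq_eq_zero_iff.1 h0))

lemma aux_grad_cont : ContinuousOn L.grad (interior L.dom) := by
  intro x hx
  apply ContinuousAt.continuousWithinAt
  obtain ⟨ε, hε0, hball⟩ := Metric.isOpen_iff.1 isOpen_interior x hx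
  set r : ℝ := ε / 3 with hr
  have hr0 : 0 < r := by positivity
  have hball2 : Metric.closedBall x (2 * r) ⊆ interior L.dom := by
    refine subset_trans ?_ hball
    intro y hy
    rw [Metric.mem_closedBall] at hy
    rw [Metric.mem_ball]
    have : (2:ℝ) * r < ε := by rw [hr]; linarith
    linarith
  obtain ⟨M, hM⟩ := (isCompact_closedBall x (2 * r)).exists_bound_of_continuousOn
    (L.aux_f_contOn.mono hball2)
  have hM0 : 0 ≤ M := le_trans (norm_nonneg _) (hM x (Metric.mem_closedBall_self (by positivity)))
  have hgb : ∀ y ∈ Metric.ball x r, ‖L.grad y‖ ≤ 2 * M / r := by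
    intro y hy
    have hyint : y ∈ interior L.dom := hball2 (Metric.ball_subset_closedBall.trans
      (Metric.closedBall_subset_closedBall (by linarith)) hy)
    rcases eq_or_ne (L.grad y) 0 with h0 | h0
    · rw [h0]; simp; positivity
    · set z : X := y + r • (‖L.grad y‖⁻¹ • L.grad y) with hzdef
      have hzball : z ∈ Metric.closedBall x (2 * r) := by
        rw [Metric.mem_closedBall]
        have h1 : dist z y ≤ r := by
          rw [hzdef, dist_eq_norm]
          simp only [add_sub_cancel_left]
          rw [norm_smul, norm_smul, norm_inv, norm_norm]
          rw [Real.norm_of_nonneg hr0.le]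
          rw [inv_mul_cancel₀ (norm_ne_zero_iff.2 h0)]
          simp
        have h2 : dist y x ≤ r := (Metric.mem_ball.1 hy).le
        calc dist z x ≤ dist z y + dist y x := dist_triangle z y x
          _ ≤ 2 * r := by linarith
      have hsub := L.aux_subgrad hyint (interior_subset (hball2 hzball))
      have hinner : ⟪z - y, L.grad y⟫_ℝ = r * ‖L.grad y‖ := by
        rw [hzdef]
        simp only [add_sub_cancel_left]
        rw [real_inner_smul_left, real_inner_smul_left, real_inner_self_eq_norm_sq]
        rw [pow_two, inv_mul_cancel_left₀ (norm_ne_zero_iff.2 h0)]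
      have hfy := hM y (Metric.ball_subset_closedBall.trans
        (Metric.closedBall_subset_closedBall (by linarith)) hy)
      have hfz := hM z hzball
      have h1 : r * ‖L.grad y‖ ≤ 2 * M := by
        rw [← hinner]
        rw [Real.norm_eq_abs] at hfy hfz
        have h2 := abs_le.1 hfy
        have h3 := abs_le.1 hfz
        linarith
      rw [le_div_iff₀ hr0]
      linarith
  -- sequential continuity
  have hcount : (𝓝 x).IsCountablyGenerated := inferInstance
  rw [ContinuousAt]
  rw [tendsto_iff_seq_tendsto]
  intro u hu
  have hev : ∀ᶠ n in atTop, u n ∈ Metric.ball x r := hu (Metric.ball_mem_nhds x hr0)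
  obtain ⟨N, hN⟩ := eventually_atTop.1 hev
  rw [← tendsto_add_atTop_iff_nat N]
  have hw : ∀ n : ℕ, u (n + N) ∈ Metric.ball x r := fun n => hN _ (Nat.le_add_left N n)
  have hwint : ∀ n : ℕ, u (n + N) ∈ interior L.dom := fun n =>
    hball2 (Metric.ball_subset_closedBall.trans
      (Metric.closedBall_subset_closedBall (by linarith)) (hw n))
  have hwx : Tendsto (fun n : ℕ => u (n + N)) atTop (𝓝 x) :=
    hu.comp (tendsto_add_atTop_nat N)
  apply tendsto_of_subseq_tendsto
  intro ns hns
  have hbdd : ∀ k, L.grad (u (ns k + N)) ∈ Metric.closedBall (0 : X) (2 * M / r) := fun k => by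
    rw [Metric.mem_closedBall, dist_zero_right]
    exact hgb _ (hw (ns k))
  obtain ⟨v, hvmem, φ, hφ, hvt⟩ := (isCompact_closedBall (0 : X) (2 * M / r)).tendsto_subseq hbdd
  refine ⟨φ, ?_⟩
  have h1 : Tendsto (fun k => u (ns (φ k) + N)) atTop (𝓝 x) :=
    hwx.comp (hns.comp hφ.tendsto_atTop)
  have hveq : v = L.grad x := by
    apply L.aux_subgrad_unique hx
    intro z hz
    have hineq : ∀ k, L.f (u (ns (φ k) + N)) + ⟪z - u (ns (φ k) + N), L.grad (u (ns (φ k) + N))⟫_ℝ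
        ≤ L.f z := fun k => L.aux_subgrad (hwint (ns (φ k))) hz
    have h2 : Tendsto (fun k => L.f (u (ns (φ k) + N))) atTop (𝓝 (L.f x)) :=
      ((L.hasGrad x hx).continuousAt.tendsto).comp h1
    have h3 : Tendsto (fun k => ⟪z - u (ns (φ k) + N), L.grad (u (ns (φ k) + N))⟫_ℝ)
        atTop (𝓝 ⟪z - x, v⟫_ℝ) :=
      Filter.Tendsto.inner (tendsto_const_nhds.sub h1) hvt
    exact le_of_tendsto (h2.add h3) (Filter.Eventually.of_forall hineq)
  exact hveq ▸ hvt

lemma aux_distTo_eq {S : Set X} {x : X} (hx : x ∈ interior L.dom)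
    (hne : (S ∩ L.dom).Nonempty) :
    L.distTo S x = L.conj (L.grad x) - L.sig S (L.grad x) := by
  have ha := L.aux_conj_grad hx
  have himg : (fun z => L.breg z x) '' (S ∩ L.dom) =
      (fun r => L.conj (L.grad x) - r) '' ((fun z => ⟪z, L.grad x⟫_ℝ - L.f z) '' (S ∩ L.dom)) := by
    rw [← Set.image_comp]
    apply Set.image_congr
    intro z hz
    simp only [Function.comp_apply, LegendreFn.breg, ha, inner_sub_left]
    ring
  rw [LegendreFn.distTo, himg]
  have hbdd := L.aux_sig_bdd (S := S) (L.aux_grad_mem_conj hx)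
  have hlub : IsLUB ((fun z => ⟪z, L.grad x⟫_ℝ - L.f z) '' (S ∩ L.dom)) (L.sig S (L.grad x)) :=
    isLUB_csSup (hne.image _) hbdd
  have hglb : IsGLB ((fun r => L.conj (L.grad x) - r) ''
      ((fun z => ⟪z, L.grad x⟫_ℝ - L.f z) '' (S ∩ L.dom)))
      (L.conj (L.grad x) - L.sig S (L.grad x)) := by
    constructor
    · rintro b ⟨rr, hr, rfl⟩
      have := hlub.1 hr
      simp only
      linarith
    · intro b hb
      have h1 : ∀ rr ∈ (fun z => ⟪z, L.grad x⟫_ℝ - L.f z) '' (S ∩ L.dom),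
          rr ≤ L.conj (L.grad x) - b := by
        intro rr hr
        have := hb (Set.mem_image_of_mem _ hr)
        linarith
      have := hlub.2 h1
      linarith
  exact hglb.csInf_eq ((hne.image _).image _)

lemma aux_sig_cont {S : Set X} (hopen : IsOpen L.domConj) (hne : (S ∩ L.dom).Nonempty) :
    ContinuousOn (L.sig S) L.domConj :=
  (L.aux_sig_convexOn hne).continuousOn hopen

lemma aux_conj_cont (hopen : IsOpen L.domConj) : ContinuousOn L.conj L.domConj :=
  L.aux_conj_convexOn.continuousOn hopen

lemma aux_distTo_contOn (hopen : IsOpen L.domConj) (S : Set X) :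
    ContinuousOn (L.distTo S) (interior L.dom) := by
  rcases (S ∩ L.dom).eq_empty_or_nonempty with h | hne
  · have : ∀ x, L.distTo S x = 0 := fun x => by
      simp [LegendreFn.distTo, h, Real.sInf_empty]
    exact (continuousOn_congr (fun x _ => this x)).2 continuousOn_const
  · refine ContinuousOn.congr (f := fun x => L.conj (L.grad x) - L.sig S (L.grad x)) ?_
      (fun x hx => L.aux_distTo_eq hx hne)
    have hmaps : Set.MapsTo L.grad (interior L.dom) L.domConj := fun x hx =>
      L.aux_grad_mem_conj hx
    exact ((L.aux_conj_cont hopen).comp L.aux_grad_cont hmaps).sub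
      ((L.aux_sig_cont hopen hne).comp L.aux_grad_cont hmaps)

lemma aux_breg_cont (z : X) : ContinuousOn (fun x => L.breg z x) (interior L.dom) := by
  unfold LegendreFn.breg
  exact (continuousOn_const.sub L.aux_f_contOn).sub
    (ContinuousOn.inner ((continuous_const.sub continuous_id).continuousOn) L.aux_grad_cont)

lemma aux_sublevel_closed (s : ℝ) : IsClosed {z ∈ L.dom | L.f z ≤ s} :=
  L.closedEpi.preimage (continuous_id.prodMk continuous_const)

lemma aux_dom_meas [MeasurableSpace X] [BorelSpace X] : MeasurableSet L.dom := by
  have h : L.dom = ⋃ n : ℕ, {z ∈ L.dom | L.f z ≤ n} := by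
    ext z
    simp only [Set.mem_iUnion, Set.mem_setOf_eq]
    constructor
    · intro hz
      obtain ⟨n, hn⟩ := exists_nat_ge (L.f z)
      exact ⟨n, hz, hn⟩
    · rintro ⟨n, hz, _⟩; exact hz
  rw [h]
  exact MeasurableSet.iUnion fun n => (L.aux_sublevel_closed n).measurableSet

lemma aux_Z_meas [MeasurableSpace X] [BorelSpace X] (x : X) (t : ℝ) :
    MeasurableSet {z ∈ L.dom | L.breg z x < t} := by
  have h : {z ∈ L.dom | L.breg z x < t} = ⋃ q : ℚ,
      ({z ∈ L.dom | L.f z ≤ (q : ℝ)} ∩ {z | (q : ℝ) < t + L.f x + ⟪z - x, L.grad x⟫_ℝ}) := by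
    ext z
    simp only [Set.mem_iUnion, Set.mem_inter_iff, Set.mem_setOf_eq]
    constructor
    · rintro ⟨hzd, hlt⟩
      have hl : L.f z < t + L.f x + ⟪z - x, L.grad x⟫_ℝ := by
        unfold LegendreFn.breg at hlt; linarith
      obtain ⟨q, hq1, hq2⟩ := exists_rat_btwn hl
      exact ⟨q, ⟨hzd, hq1.le⟩, hq2⟩
    · rintro ⟨q, ⟨hzd, h1⟩, h2⟩
      refine ⟨hzd, ?_⟩
      unfold LegendreFn.breg
      linarith
  rw [h]
  refine MeasurableSet.iUnion fun q => ((L.aux_sublevel_closed q).measurableSet.inter ?_)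
  have hcont : Continuous fun z : X => t + L.f x + ⟪z - x, L.grad x⟫_ℝ :=
    continuous_const.add (Continuous.inner (continuous_id.sub continuous_const) continuous_const)
  exact (isOpen_lt continuous_const hcont).measurableSet

lemma aux_meas_i [MeasurableSpace X] [BorelSpace X] {I : Type*} [MeasurableSpace I]
    (Cs : I → Set X) (hSV : ∀ Z : Set X, MeasurableSet Z → MeasurableSet {i | (Cs i ∩ Z).Nonempty})
    {x : X} (hx : x ∈ interior L.dom) :
    Measurable fun i => L.distTo (Cs i) x := by
  apply measurable_of_Iio
  intro t
  have h : (fun i => L.distTo (Cs i) x) ⁻¹' Set.Iio t =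
      {i | (Cs i ∩ {z ∈ L.dom | L.breg z x < t}).Nonempty} ∪
      ({i | (Cs i ∩ L.dom).Nonempty}ᶜ ∩ {i | (0 : ℝ) < t}) := by
    ext i
    simp only [Set.mem_preimage, Set.mem_Iio, Set.mem_union, Set.mem_inter_iff,
      Set.mem_compl_iff, Set.mem_setOf_eq]
    rcases (Cs i ∩ L.dom).eq_empty_or_nonempty with he | hne
    · have hd : L.distTo (Cs i) x = 0 := by
        simp [LegendreFn.distTo, he, Real.sInf_empty]
      have hZsub : (Cs i ∩ {z ∈ L.dom | L.breg z x < t}) = ∅ := by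
        rw [← Set.subset_empty_iff, ← he]
        exact Set.inter_subset_inter_right _ (Set.sep_subset _ _)
      rw [hd, hZsub, he]
      simp
    · have hiff : L.distTo (Cs i) x < t ↔ ∃ z ∈ Cs i ∩ L.dom, L.breg z x < t := by
        rw [LegendreFn.distTo, csInf_lt_iff (L.aux_bddBelow hx) (hne.image _)]
        constructor
        · rintro ⟨b, ⟨z, hz, rfl⟩, hb⟩; exact ⟨z, hz, hb⟩
        · rintro ⟨z, hz, hb⟩; exact ⟨_, Set.mem_image_of_mem _ hz, hb⟩
      have hiff2 : (Cs i ∩ {z ∈ L.dom | L.breg z x < t}).Nonempty ↔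
          ∃ z ∈ Cs i ∩ L.dom, L.breg z x < t := by
        constructor
        · rintro ⟨z, hzc, hzmem⟩
          rw [Set.mem_sep_iff] at hzmem
          exact ⟨z, ⟨hzc, hzmem.1⟩, hzmem.2⟩
        · rintro ⟨z, hzm, hzb⟩
          exact ⟨z, hzm.1, Set.mem_sep_iff.2 ⟨hzm.2, hzb⟩⟩
      rw [hiff]
      constructor
      · intro h
        exact Or.inl (hiff2.2 h)
      · rintro (hA | ⟨hB, _⟩)
        · exact hiff2.1 hA
        · exact absurd hne hB
  rw [h]
  refine (hSV _ (L.aux_Z_meas x t)).union (((hSV _ L.aux_dom_meas).compl).inter ?_)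
  rcases lt_or_ge 0 t with h0 | h0
  · have : {i : I | (0:ℝ) < t} = Set.univ := by ext i; simp [h0]
    rw [this]; exact MeasurableSet.univ
  · have : {i : I | (0:ℝ) < t} = ∅ := by ext i; simp; linarith
    rw [this]; exact MeasurableSet.empty

end LegendreFn

end AuxProofs

/-- In the stochastic convex feasibility problem, under H0, the mean Bregman
distance `D̄_C = E[D_{C_ξ}(·)]` is lower semicontinuous on `int (dom φ)`, and it vanishes at
`x ∈ int (dom φ)` exactly when `x ∈ C`. -/
theorem stmt_4 {X : Type*} [NormedAddCommGroup X] [InnerProductSpace ℝ X]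
    [FiniteDimensional ℝ X] [MeasurableSpace X] [BorelSpace X]
    {I : Type*} [MeasurableSpace I] {Ω : Type*} [MeasurableSpace Ω]
    (P : Measure Ω) [IsProbabilityMeasure P]
    (L : LegendreFn X) (Cs : I → Set X)
    (hCs : ∀ i, (Cs i).Nonempty ∧ IsClosed (Cs i) ∧ Convex ℝ (Cs i))
    (hSV : ∀ Z : Set X, MeasurableSet Z → MeasurableSet {i | (Cs i ∩ Z).Nonempty})
    (ξ : Ω → I) (hξ : Measurable ξ)
    (C : Set X) (hC : C = {x | ∀ᵐ ω ∂P, x ∈ Cs (ξ ω)}) (hCne : C.Nonempty)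
    (hH0 : H0 L C) :
    LowerSemicontinuousOn (DbarFn L Cs P ξ) (interior L.dom) ∧
      ∀ x ∈ interior L.dom, (x ∈ C ↔ DbarFn L Cs P ξ x = 0) := by
  obtain ⟨-, hopen, c, hcint, hcC⟩ := hH0
  have hcdom : c ∈ L.dom := interior_subset hcint
  have hcae : ∀ᵐ ω ∂P, c ∈ Cs (ξ ω) := by
    have h := hC ▸ hcC
    exact h
  have hmeas : ∀ x, x ∈ interior L.dom → Measurable fun ω => L.distTo (Cs (ξ ω)) x :=
    fun x hx => (L.aux_meas_i Cs hSV hx).comp hξ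
  have hnonneg : ∀ x ∈ interior L.dom, ∀ ω, 0 ≤ L.distTo (Cs (ξ ω)) x :=
    fun x hx ω => L.aux_distTo_nonneg hx
  constructor
  · -- lower semicontinuity (in fact, continuity)
    have hcont : ContinuousOn (DbarFn L Cs P ξ) (interior L.dom) := by
      intro x hx
      have hnx : 𝓝[interior L.dom] x = 𝓝 x :=
        nhdsWithin_eq_nhds.2 (isOpen_interior.mem_nhds hx)
      unfold ContinuousWithinAt
      rw [hnx, tendsto_iff_seq_tendsto]
      intro u hu
      have hev : ∀ᶠ n in atTop, u n ∈ interior L.dom := hu (isOpen_interior.mem_nhds hx)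
      obtain ⟨N, hN⟩ := eventually_atTop.1 hev
      rw [← tendsto_add_atTop_iff_nat N]
      have hwmem : ∀ n : ℕ, u (n + N) ∈ interior L.dom := fun n => hN _ (Nat.le_add_left N n)
      have hwx : Tendsto (fun n : ℕ => u (n + N)) atTop (𝓝 x) :=
        hu.comp (tendsto_add_atTop_nat N)
      have hbc : Tendsto (fun n : ℕ => L.breg c (u (n + N))) atTop (𝓝 (L.breg c x)) :=
        (((L.aux_breg_cont c).continuousAt (isOpen_interior.mem_nhds hx)).tendsto).comp hwx
      obtain ⟨M, hM⟩ := hbc.bddAbove_range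
      show Tendsto (fun n => DbarFn L Cs P ξ (u (n + N))) atTop (𝓝 (DbarFn L Cs P ξ x))
      unfold DbarFn
      apply MeasureTheory.tendsto_integral_of_dominated_convergence (fun _ => M)
      · exact fun n => ((hmeas _ (hwmem n))).aestronglyMeasurable
      · exact integrable_const M
      · intro n
        filter_upwards [hcae] with ω hω
        rw [Real.norm_of_nonneg (hnonneg _ (hwmem n) ω)]
        exact (L.aux_distTo_le (hwmem n) ⟨hω, hcdom⟩).trans (hM ⟨n, rfl⟩)
      · refine Filter.Eventually.of_forall fun ω => ?_
        exact (((L.aux_distTo_contOn hopen (Cs (ξ ω))).continuousAt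
          (isOpen_interior.mem_nhds hx)).tendsto).comp hwx
    exact hcont.lowerSemicontinuousOn
  · intro x hx
    have hint : Integrable (fun ω => L.distTo (Cs (ξ ω)) x) P := by
      refine Integrable.mono' (integrable_const (L.breg c x))
        ((hmeas x hx).aestronglyMeasurable) ?_
      filter_upwards [hcae] with ω hω
      rw [Real.norm_of_nonneg (hnonneg x hx ω)]
      exact L.aux_distTo_le hx ⟨hω, hcdom⟩
    constructor
    · intro hxC
      have hxae : ∀ᵐ ω ∂P, x ∈ Cs (ξ ω) := by
        have h := hC ▸ hxC
        exact h
      have heq : (fun ω => L.distTo (Cs (ξ ω)) x) =ᵐ[P] 0 := by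
        filter_upwards [hxae] with ω hω
        have h1 : L.distTo (Cs (ξ ω)) x ≤ L.breg x x :=
          L.aux_distTo_le hx ⟨hω, interior_subset hx⟩
        have h2 : L.breg x x = 0 := by simp [LegendreFn.breg]
        have h3 : L.distTo (Cs (ξ ω)) x ≤ 0 := h2 ▸ h1
        simpa using le_antisymm h3 (hnonneg x hx ω)
      unfold DbarFn
      rw [integral_congr_ae heq]
      simp
    · intro h0
      unfold DbarFn at h0
      have heq := (integral_eq_zero_iff_of_nonneg (fun ω => hnonneg x hx ω) hint).1 h0
      rw [hC]
      show ∀ᵐ ω ∂P, x ∈ Cs (ξ ω)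
      filter_upwards [heq, hcae] with ω hω1 hω2
      exact L.aux_zero_mem (hCs (ξ ω)).2.1 (hCs (ξ ω)).2.2 ⟨c, hω2, hcint⟩ hx
        (by simpa using hω1)
end
end

section
/- Suppose H0 holds. Then there exists a μ-negligible set J ⊆ I such that C = ⋂_{i ∈ I∖J} C_i. Moreover, if (ξ_k) is a sequence of I-valued random variables each having the same distribution μ as ξ, then there exists a P-negligible set N ⊆ Ω such that, for every k ∈ ℕ, C = ⋂_{ω ∈ Ω∖N} C_{ξ_k(ω)}. -/
open Set Filter Topology MeasureTheory ProbabilityTheory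
open scoped InnerProductSpace ENNReal Classical

noncomputable section

/-- Under H0, `C` coincides with the intersection of the `C_i` over the
complement of a `μ`-negligible set `J`, and, for any sequence of `I`-valued random variables
distributed as `ξ`, with the intersection of the `C_{ξ_k(ω)}` over `ω` outside a
`P`-negligible set `N`. -/
theorem stmt_5 {X : Type*} [NormedAddCommGroup X] [InnerProductSpace ℝ X]
    [FiniteDimensional ℝ X] [MeasurableSpace X] [BorelSpace X]
    {I : Type*} [MeasurableSpace I] {Ω : Type*} [MeasurableSpace Ω]
    (P : Measure Ω) [IsProbabilityMeasure P]
    (L : LegendreFn X) (Cs : I → Set X)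
    (hCs : ∀ i, (Cs i).Nonempty ∧ IsClosed (Cs i) ∧ Convex ℝ (Cs i))
    (hSV : ∀ Z : Set X, MeasurableSet Z → MeasurableSet {i | (Cs i ∩ Z).Nonempty})
    (ξ : Ω → I) (hξ : Measurable ξ)
    (C : Set X) (hC : C = {x | ∀ᵐ ω ∂P, x ∈ Cs (ξ ω)}) (hCne : C.Nonempty)
    (hH0 : H0 L C) :
    (∃ J : Set I, Measure.map ξ P J = 0 ∧ C = ⋂ i ∈ Jᶜ, Cs i) ∧
      ∀ ξs : ℕ → Ω → I, (∀ k, Measurable (ξs k)) →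
        (∀ k, Measure.map (ξs k) P = Measure.map ξ P) →
        ∃ N : Set Ω, P N = 0 ∧ ∀ k, C = ⋂ ω ∈ Nᶜ, Cs (ξs k ω) := by
  classical
  -- bad index set for a point x
  have hmeas : ∀ x : X, MeasurableSet {i | x ∉ Cs i} := by
    intro x
    have h := hSV {x} (measurableSet_singleton x)
    have he : {i | x ∉ Cs i} = {i | (Cs i ∩ {x}).Nonempty}ᶜ := by
      ext i
      simp [Set.Nonempty, Set.mem_inter_iff, eq_comm]
    rw [he]
    exact h.compl
  have hnull : ∀ x ∈ C, Measure.map ξ P {i | x ∉ Cs i} = 0 := by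
    intro x hx
    rw [Measure.map_apply hξ (hmeas x)]
    rw [hC] at hx
    simpa [ae_iff] using hx
  have hconv : ∀ x : X, Measure.map ξ P {i | x ∉ Cs i} = 0 → x ∈ C := by
    intro x hx0
    rw [hC]
    rw [Measure.map_apply hξ (hmeas x)] at hx0
    show ∀ᵐ ω ∂P, x ∈ Cs (ξ ω)
    rw [ae_iff]
    exact hx0
  -- countable dense subset of C
  obtain ⟨s, hscount, hsdense⟩ := TopologicalSpace.exists_countable_dense (↥C)
  set D : Set X := Subtype.val '' s with hD
  have hDsub : D ⊆ C := by
    rintro _ ⟨⟨y, hy⟩, -, rfl⟩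
    exact hy
  have hDcount : D.Countable := hscount.image _
  have hDdense : C ⊆ closure D := by
    intro x hx
    have h1 : (⟨x, hx⟩ : ↥C) ∈ closure s := hsdense _
    have h2 : (Subtype.val '' closure s : Set X) ⊆ closure D :=
      image_closure_subset_closure_image continuous_subtype_val
    exact h2 ⟨⟨x, hx⟩, h1, rfl⟩
  set J : Set I := ⋃ x ∈ D, {i | x ∉ Cs i} with hJ
  have hJmeas : MeasurableSet J :=
    MeasurableSet.biUnion hDcount fun x _ => hmeas x
  have hJnull : Measure.map ξ P J = 0 :=
    (measure_biUnion_null_iff hDcount).2 fun x hx => hnull x (hDsub hx)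
  have hCsubset : ∀ i ∉ J, C ⊆ Cs i := by
    intro i hi
    have hDi : D ⊆ Cs i := by
      intro d hd
      by_contra h
      exact hi (mem_biUnion hd h)
    have hcl : closure D ⊆ Cs i := (hCs i).2.1.closure_subset_iff.2 hDi
    exact fun x hx => hcl (hDdense hx)
  constructor
  · refine ⟨J, hJnull, ?_⟩
    apply Subset.antisymm
    · intro x hx
      exact mem_biInter fun i hi => hCsubset i hi hx
    · intro x hx
      refine hconv x (measure_mono_null ?_ hJnull)
      intro i hi
      by_contra hiJ
      exact hi (mem_iInter₂.1 hx i hiJ)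
  · intro ξs hξs hξseq
    have hNnull : P (⋃ k, ξs k ⁻¹' J) = 0 := by
      refine measure_iUnion_null fun k => ?_
      have : P (ξs k ⁻¹' J) = Measure.map (ξs k) P J :=
        (Measure.map_apply (hξs k) hJmeas).symm
      rw [this, hξseq k, hJnull]
    refine ⟨⋃ k, ξs k ⁻¹' J, hNnull, ?_⟩
    intro k
    apply Subset.antisymm
    · intro x hx
      refine mem_biInter fun ω hω => ?_
      have hωJ : ξs k ω ∉ J := fun h => hω (mem_iUnion.2 ⟨k, h⟩)
      exact hCsubset _ hωJ hx
    · intro x hx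
      refine hconv x ?_
      rw [← hξseq k, Measure.map_apply (hξs k) (hmeas x)]
      refine measure_mono_null ?_ hNnull
      intro ω hω
      by_contra hωN
      exact hω (mem_iInter₂.1 hx ω hωN)
end
end
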